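/- Let J = (a,b) with a < 0 < b, let g : ℝ → ℝ be C² on J with g(0) = 0, g'(0) > 0 and x·g(x) > 0 for all x ∈ J \ {0}, and let G(x) = ∫₀ˣ g(s) ds. If g(x)² − 2·G(x)·g'(x) > 0 for all x ∈ J \ {0}, then x · d/dx(g(x)/x) < 0 for all x ∈ J \ {0}. If instead g(x)² − 2·G(x)·g'(x) < 0 for all x ∈ J \ {0}, then x · d/dx(g(x)/x) > 0 for all x ∈ J \ {0}. -/

import Mathlib

open Set Real

section Aux
open Filter MeasureTheory intervalIntegral Topology

lemma core_right (a b : ℝ) (g : ℝ → ℝ) (ha : a < 0) (hb : 0 < b)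
    (hg : ContDiffOn ℝ 2 g (Ioo a b)) (hg0 : g 0 = 0) (hg'0 : 0 < deriv g 0)
    (hgpos : ∀ x ∈ Ioo 0 b, 0 < g x)
    (ε : ℝ)
    (hN : ∀ x ∈ Ioo 0 b,
      0 < ε * (g x ^ 2 - 2 * (∫ s in (0:ℝ)..x, g s) * deriv g x)) :
    ∀ x ∈ Ioo 0 b, 0 < ε * (g x - x * deriv g x) := by
  set G : ℝ → ℝ := fun x => ∫ s in (0:ℝ)..x, g s with hGdef
  have hN' : ∀ x ∈ Ioo 0 b, 0 < ε * (g x ^ 2 - 2 * G x * deriv g x) := hN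
  have hab : (0:ℝ) ∈ Ioo a b := ⟨ha, hb⟩
  have hopen : IsOpen (Ioo a b) := isOpen_Ioo
  have hmem : ∀ x ∈ Ioo a b, Ioo a b ∈ 𝓝 x := fun x hx => hopen.mem_nhds hx
  have hsub : Ioo 0 b ⊆ Ioo a b := Ioo_subset_Ioo ha.le le_rfl
  have hgc : ContinuousOn g (Ioo a b) := hg.continuousOn
  have hgd : ∀ x ∈ Ioo a b, HasDerivAt g (deriv g x) x := fun x hx =>
    (((hg.differentiableOn (by norm_num)) x hx).differentiableAt (hmem x hx)).hasDerivAt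
  have hg'c : ContinuousOn (deriv g) (Ioo a b) :=
    hg.continuousOn_deriv_of_isOpen hopen (by norm_num)
  have hInt : ∀ x ∈ Ioo a b, IntervalIntegrable g volume 0 x := by
    intro x hx
    apply (hgc.mono _).intervalIntegrable
    exact Set.ordConnected_Ioo.uIcc_subset hab hx
  have hGd : ∀ x ∈ Ioo a b, HasDerivAt G (g x) x := by
    intro x hx
    exact integral_hasDerivAt_right (hInt x hx)
      (hgc.stronglyMeasurableAtFilter hopen x hx)
      (hgc.continuousAt (hmem x hx))
  have hGpos : ∀ x ∈ Ioo 0 b, 0 < G x := by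
    intro x hx
    exact intervalIntegral_pos_of_pos_on (hInt x (hsub hx))
      (fun s hs => hgpos s ⟨hs.1, hs.2.trans hx.2⟩) hx.1
  set φ : ℝ → ℝ := fun x => ε * ((x * g x - 2 * G x) / Real.sqrt (G x)) with hφdef
  -- derivative of φ
  have hφd : ∀ x ∈ Ioo 0 b, HasDerivAt φ
      (ε * (((1 * g x + x * deriv g x - 2 * g x) * Real.sqrt (G x)
        - (x * g x - 2 * G x) * (g x / (2 * Real.sqrt (G x)))) / Real.sqrt (G x) ^ 2)) x := by
    intro x hx
    have hx' : x ∈ Ioo a b := hsub hx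
    have hs : 0 < Real.sqrt (G x) := Real.sqrt_pos.mpr (hGpos x hx)
    have hnum : HasDerivAt (fun y => y * g y - 2 * G y)
        (1 * g x + x * deriv g x - 2 * g x) x :=
      ((hasDerivAt_id x).mul (hgd x hx')).sub ((hGd x hx').const_mul 2)
    have hden : HasDerivAt (fun y => Real.sqrt (G y)) (g x / (2 * Real.sqrt (G x))) x :=
      (hGd x hx').sqrt (hGpos x hx).ne'
    exact (hnum.div hden hs.ne').const_mul ε
  have hderiv_neg : ∀ x ∈ Ioo 0 b, deriv φ x < 0 := by
    intro x hx
    rw [(hφd x hx).deriv]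
    have hG := hGpos x hx
    have hNx := hN' x hx
    set s := Real.sqrt (G x) with hsdef
    have hs : 0 < s := Real.sqrt_pos.mpr hG
    have hs2 : s ^ 2 = G x := Real.sq_sqrt hG.le
    rw [← hs2] at hNx ⊢
    have key : ε * (((1 * g x + x * deriv g x - 2 * g x) * s
        - (x * g x - 2 * s ^ 2) * (g x / (2 * s))) / s ^ 2)
        = -(x * (ε * (g x ^ 2 - 2 * s ^ 2 * deriv g x))) / (2 * s ^ 3) := by
      field_simp
      ring
    rw [key]
    apply div_neg_of_neg_of_pos
    · have := mul_pos hx.1 hNx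
      linarith
    · positivity
  have hanti : StrictAntiOn φ (Ioo 0 b) := by
    apply strictAntiOn_of_deriv_neg (convex_Ioo 0 b)
      (fun x hx => (hφd x hx).continuousAt.continuousWithinAt)
    rwa [interior_Ioo]
  -- limit of φ at 0⁺ is 0
  have hG0 : G 0 = 0 := integral_same
  have hGc0 : ContinuousAt G 0 := (hGd 0 hab).continuousAt
  have hsq0 : Tendsto (fun x => Real.sqrt (G x)) (𝓝[>] (0:ℝ)) (𝓝 0) := by
    apply tendsto_nhdsWithin_of_tendsto_nhds
    have : ContinuousAt (fun x => Real.sqrt (G x)) 0 :=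
      Real.continuous_sqrt.continuousAt.comp hGc0
    simpa [hG0] using this.tendsto
  have hmemIoo : Ioo (0:ℝ) b ∈ 𝓝[>] (0:ℝ) := Ioo_mem_nhdsGT_of_mem ⟨le_refl 0, hb⟩
  have hratio : Tendsto (fun x => (x * g x) / G x) (𝓝[>] (0:ℝ)) (𝓝 2) := by
    apply HasDerivAt.lhopital_zero_right_on_Ioo hb
      (f' := fun x => 1 * g x + x * deriv g x) (g' := fun x => g x)
      (fun x hx => (hasDerivAt_id x).mul (hgd x (hsub hx)))
      (fun x hx => hGd x (hsub hx))
      (fun x hx => (hgpos x hx).ne')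
    · apply tendsto_nhdsWithin_of_tendsto_nhds
      have : ContinuousAt (id * g) 0 :=
        continuousAt_id.mul (hgc.continuousAt (hmem 0 hab))
      simpa [hg0] using this.tendsto
    · apply tendsto_nhdsWithin_of_tendsto_nhds
      simpa [hG0] using hGc0.tendsto
    · -- (g x + x g'(x)) / g x → 2
      have hslope : Tendsto (fun x => g x / x) (𝓝[≠] (0:ℝ)) (𝓝 (deriv g 0)) := by
        have := hasDerivAt_iff_tendsto_slope.mp (hgd 0 hab)
        apply this.congr
        intro x
        simp [slope_def_field, hg0]
      have hinv : Tendsto (fun x => x / g x) (𝓝[≠] (0:ℝ)) (𝓝 (deriv g 0)⁻¹) := by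
        apply (hslope.inv₀ hg'0.ne').congr
        intro x
        rw [inv_div]
      have hg'0t : Tendsto (deriv g) (𝓝[≠] (0:ℝ)) (𝓝 (deriv g 0)) :=
        tendsto_nhdsWithin_of_tendsto_nhds (hg'c.continuousAt (hmem 0 hab)).tendsto
      have hcomb : Tendsto (fun x => 1 + (x / g x) * deriv g x) (𝓝[≠] (0:ℝ)) (𝓝 2) := by
        have h2 : (1:ℝ) + (deriv g 0)⁻¹ * deriv g 0 = 2 := by
          rw [inv_mul_cancel₀ hg'0.ne']; norm_num
        have := (hinv.mul hg'0t).const_add 1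
        rwa [h2] at this
      have hmono : 𝓝[>] (0:ℝ) ≤ 𝓝[≠] (0:ℝ) :=
        nhdsWithin_mono 0 (fun x hx => ne_of_gt hx)
      apply Tendsto.congr' _ (hcomb.mono_left hmono)
      filter_upwards [hmemIoo] with x hx
      have hgx := (hgpos x hx).ne'
      field_simp
  have hφlim : Tendsto φ (𝓝[>] (0:ℝ)) (𝓝 0) := by
    have h1 : Tendsto (fun x => ε * (((x * g x) / G x - 2) * Real.sqrt (G x)))
        (𝓝[>] (0:ℝ)) (𝓝 (ε * (((2:ℝ) - 2) * 0))) :=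
      ((hratio.sub_const 2).mul hsq0).const_mul ε
    rw [show ε * (((2:ℝ) - 2) * 0) = 0 by ring] at h1
    apply h1.congr'
    filter_upwards [hmemIoo] with x hx
    have hG := hGpos x hx
    have hs : 0 < Real.sqrt (G x) := Real.sqrt_pos.mpr hG
    have hs2 : Real.sqrt (G x) ^ 2 = G x := Real.sq_sqrt hG.le
    show ε * (((x * g x) / G x - 2) * Real.sqrt (G x))
      = ε * ((x * g x - 2 * G x) / Real.sqrt (G x))
    field_simp
    linear_combination (ε * x * g x - 2 * ε * G x) * hs2
  have hle : ∀ x ∈ Ioo 0 b, φ x ≤ 0 := by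
    intro x hx
    refine ge_of_tendsto hφlim ?_
    filter_upwards [Ioo_mem_nhdsGT_of_mem (⟨le_refl 0, hx.1⟩ : (0:ℝ) ∈ Ico 0 x)] with y hy
    exact (hanti ⟨hy.1, hy.2.trans hx.2⟩ hx hy.2).le
  intro x hx
  have hx2 : x / 2 ∈ Ioo 0 b := ⟨by linarith [hx.1], by linarith [hx.1, hx.2]⟩
  have hlt : φ x < 0 :=
    lt_of_lt_of_le (hanti hx2 hx (by linarith [hx.1])) (hle _ hx2)
  have hG := hGpos x hx
  have hs : 0 < Real.sqrt (G x) := Real.sqrt_pos.mpr hG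
  have hh : ε * (x * g x - 2 * G x) < 0 := by
    have heq : ε * (x * g x - 2 * G x)
        = (ε * ((x * g x - 2 * G x) / Real.sqrt (G x))) * Real.sqrt (G x) := by
      field_simp
    rw [heq]
    exact mul_neg_of_neg_of_pos hlt hs
  have hNx := hN' x hx
  have hgx := hgpos x hx
  nlinarith [mul_pos hx.1 hNx, mul_pos hgx (neg_pos.mpr hh), hG]

lemma core_left (a b : ℝ) (g : ℝ → ℝ) (ha : a < 0) (hb : 0 < b)
    (hg : ContDiffOn ℝ 2 g (Ioo a b)) (hg0 : g 0 = 0) (hg'0 : 0 < deriv g 0)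
    (hgneg : ∀ x ∈ Ioo a 0, g x < 0)
    (ε : ℝ)
    (hN : ∀ x ∈ Ioo a 0,
      0 < ε * (g x ^ 2 - 2 * (∫ s in (0:ℝ)..x, g s) * deriv g x)) :
    ∀ x ∈ Ioo a 0, 0 < ε * (x * deriv g x - g x) := by
  set h : ℝ → ℝ := fun y => -g (-y) with hhdef
  have hmapsTo : MapsTo (fun y : ℝ => -y) (Ioo (-b) (-a)) (Ioo a b) := by
    intro y hy
    simp only [mem_Ioo] at hy ⊢
    constructor <;> [linarith [hy.2]; linarith [hy.1]]
  have hgd : ∀ x ∈ Ioo a b, HasDerivAt g (deriv g x) x := fun x hx =>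
    (((hg.differentiableOn (by norm_num)) x hx).differentiableAt
      (isOpen_Ioo.mem_nhds hx)).hasDerivAt
  have hhd : ∀ y : ℝ, -y ∈ Ioo a b → HasDerivAt h (deriv g (-y)) y := by
    intro y hy
    have h1 : HasDerivAt (fun z : ℝ => g (-z)) (deriv g (-y) * (-1)) y :=
      (hgd (-y) hy).comp y (hasDerivAt_neg y)
    have h2 := h1.neg
    rw [mul_neg_one, neg_neg] at h2
    exact h2
  have hhderiv : ∀ y : ℝ, -y ∈ Ioo a b → deriv h y = deriv g (-y) :=
    fun y hy => (hhd y hy).deriv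
  have h0ab : (0:ℝ) ∈ Ioo a b := ⟨ha, hb⟩
  have h0ab' : -(0:ℝ) ∈ Ioo a b := by simpa using h0ab
  have hcd : ContDiffOn ℝ 2 h (Ioo (-b) (-a)) :=
    (hg.comp contDiff_neg.contDiffOn hmapsTo).neg
  have hint : ∀ y : ℝ, (∫ s in (0:ℝ)..y, h s) = ∫ s in (0:ℝ)..(-y), g s := by
    intro y
    rw [hhdef]
    simp only [intervalIntegral.integral_neg, intervalIntegral.integral_comp_neg]
    rw [intervalIntegral.integral_symm]
    simp
  have key := core_right (-b) (-a) h (by linarith) (by linarith) hcd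
    (by simp [hhdef, hg0])
    (by rw [hhderiv 0 h0ab']; simpa)
    (by
      intro y hy
      have hmy : -y ∈ Ioo a 0 := ⟨by linarith [hy.2], by linarith [hy.1]⟩
      have := hgneg (-y) hmy
      simp only [hhdef]
      linarith)
    ε
    (by
      intro y hy
      have hmy : -y ∈ Ioo a 0 := ⟨by linarith [hy.2], by linarith [hy.1]⟩
      have hmy' : -y ∈ Ioo a b := ⟨hmy.1, hmy.2.trans hb⟩
      have := hN (-y) hmy
      rw [hint y, hhderiv y hmy']
      simp only [hhdef]
      calc (0:ℝ) < ε * (g (-y) ^ 2 - 2 * (∫ s in (0:ℝ)..(-y), g s) * deriv g (-y)) := this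
        _ = ε * ((-g (-y)) ^ 2 - 2 * (∫ s in (0:ℝ)..(-y), g s) * deriv g (-y)) := by ring)
  intro x hx
  have hyx : -x ∈ Ioo 0 (-a) := ⟨by linarith [hx.2], by linarith [hx.1]⟩
  have := key (-x) hyx
  rw [hhderiv (-x) (by simpa using (⟨hx.1, hx.2.trans hb⟩ : x ∈ Ioo a b))] at this
  simp only [hhdef, neg_neg] at this
  calc (0:ℝ) < ε * (-g x - -x * deriv g x) := this
    _ = ε * (x * deriv g x - g x) := by ring

lemma main_eps (a b : ℝ) (g : ℝ → ℝ) (ha : a < 0) (hb : 0 < b)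
    (hg : ContDiffOn ℝ 2 g (Ioo a b)) (hg0 : g 0 = 0) (hg'0 : 0 < deriv g 0)
    (hxg : ∀ x ∈ Ioo a b, x ≠ 0 → 0 < x * g x)
    (G : ℝ → ℝ) (hG : ∀ x, G x = ∫ s in (0:ℝ)..x, g s)
    (ε : ℝ)
    (hN : ∀ x ∈ Ioo a b, x ≠ 0 → 0 < ε * (g x ^ 2 - 2 * G x * deriv g x)) :
    ∀ x ∈ Ioo a b, x ≠ 0 → ε * (x * deriv (fun y => g y / y) x) < 0 := by
  have hgpos : ∀ x ∈ Ioo 0 b, 0 < g x := by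
    intro x hx
    have := hxg x ⟨lt_trans ha hx.1, hx.2⟩ hx.1.ne'
    nlinarith [hx.1]
  have hgneg : ∀ x ∈ Ioo a 0, g x < 0 := by
    intro x hx
    have := hxg x ⟨hx.1, hx.2.trans hb⟩ hx.2.ne
    nlinarith [hx.2]
  have hgd : ∀ x ∈ Ioo a b, HasDerivAt g (deriv g x) x := fun x hx =>
    (((hg.differentiableOn (by norm_num)) x hx).differentiableAt
      (isOpen_Ioo.mem_nhds hx)).hasDerivAt
  have hR := core_right a b g ha hb hg hg0 hg'0 hgpos ε (by
    intro x hx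
    have := hN x ⟨lt_trans ha hx.1, hx.2⟩ hx.1.ne'
    rwa [hG x] at this)
  have hL := core_left a b g ha hb hg hg0 hg'0 hgneg ε (by
    intro x hx
    have := hN x ⟨hx.1, hx.2.trans hb⟩ hx.2.ne
    rwa [hG x] at this)
  intro x hx hx0
  have hd : deriv (fun y => g y / y) x = (deriv g x * x - g x * 1) / x ^ 2 :=
    ((hgd x hx).div (hasDerivAt_id x) hx0).deriv
  rw [hd, show x * ((deriv g x * x - g x * 1) / x ^ 2) = (x * deriv g x - g x) / x by
      field_simp, ← mul_div_assoc]
  rcases lt_or_gt_of_ne hx0 with hneg | hpos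
  · exact div_neg_of_pos_of_neg (hL x ⟨hx.1, hneg⟩) hneg
  · apply div_neg_of_neg_of_pos _ hpos
    linarith [hR x ⟨hpos, hx.2⟩]

end Aux

/-- If `g(x)² − 2G(x)g'(x) > 0` on `J \ {0}` then `x · d/dx (g(x)/x) < 0` on `J \ {0}`;
if instead `g(x)² − 2G(x)g'(x) < 0` on `J \ {0}` then `x · d/dx (g(x)/x) > 0` on `J \ {0}`. -/
theorem deriv_div_sign_of_sq_sub_two_G_mul_deriv
    (a b : ℝ) (g : ℝ → ℝ) (ha : a < 0) (hb : 0 < b)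
    (hg : ContDiffOn ℝ 2 g (Ioo a b)) (hg0 : g 0 = 0) (hg'0 : 0 < deriv g 0)
    (hxg : ∀ x ∈ Ioo a b, x ≠ 0 → 0 < x * g x)
    (G : ℝ → ℝ) (hG : ∀ x, G x = ∫ s in (0:ℝ)..x, g s) :
    ((∀ x ∈ Ioo a b, x ≠ 0 → 0 < g x ^ 2 - 2 * G x * deriv g x) →
      ∀ x ∈ Ioo a b, x ≠ 0 → x * deriv (fun y => g y / y) x < 0) ∧
    ((∀ x ∈ Ioo a b, x ≠ 0 → g x ^ 2 - 2 * G x * deriv g x < 0) →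
      ∀ x ∈ Ioo a b, x ≠ 0 → 0 < x * deriv (fun y => g y / y) x) := by
  constructor
  · intro hN x hx hx0
    have := main_eps a b g ha hb hg hg0 hg'0 hxg G hG 1
      (fun x hx hx0 => by linarith [hN x hx hx0]) x hx hx0
    linarith
  · intro hN x hx hx0
    have := main_eps a b g ha hb hg hg0 hg'0 hxg G hG (-1)
      (fun x hx hx0 => by linarith [hN x hx hx0]) x hx hx0
    linarith
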